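/- arXiv:1904.10266 — 3 statements merged into one kernel-verified Lean document; each statement's English description precedes it below -/
import Mathlib

section
/- Every implication digraph obtained from a 2-CNF formula with m clauses has exactly 2^m sum-representations. Consequently, |F(n,m)| = 2^{-m}·|D°(2n,m)|, where F(n,m) is the set of 2-CNF formulae with n variables and m clauses and D°(2n,m) is the set of sum-representation digraphs with 2n vertices and m edges. -/
/-- Literals over `n` Boolean variables. -/
abbrev Lit (n : ℕ) := Fin n × Bool

/-- Negation of a literal. -/
def lneg {n : ℕ} (l : Lit n) : Lit n := (l.1, !l.2)

/-- The complementary edge of a directed edge: `x → y ↦ ȳ → x̄`. -/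
def ecomp {n : ℕ} (e : Lit n × Lit n) : Lit n × Lit n := (lneg e.2, lneg e.1)

/-- A sum-representation digraph: no loops, no edges `x → x̄`, and conflict-free
(no two complementary edges). -/
def IsSumRep {n : ℕ} (E : Finset (Lit n × Lit n)) : Prop :=
  (∀ e ∈ E, e.1 ≠ e.2) ∧ (∀ e ∈ E, e.2 ≠ lneg e.1) ∧ (∀ e ∈ E, ecomp e ∉ E)

/-- The implication digraph `G + Ḡ` represented by a sum-representation digraph. -/
def implDigraph {n : ℕ} (E : Finset (Lit n × Lit n)) : Finset (Lit n × Lit n) :=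
  E ∪ E.image ecomp

/-- The two implication edges of a clause `(x ∨ y)`: `x̄ → y` and `ȳ → x`. -/
def clauseEdges {n : ℕ} : Sym2 (Lit n) → Finset (Lit n × Lit n) :=
  Sym2.lift ⟨fun a b => ({(lneg a, b), (lneg b, a)} : Finset (Lit n × Lit n)),
    fun a b => Finset.pair_comm _ _⟩

/-- The implication digraph of a 2-CNF formula (a finite set of clauses). -/
def formulaDigraph {n : ℕ} (F : Finset (Sym2 (Lit n))) : Finset (Lit n × Lit n) :=
  F.biUnion clauseEdges

def toClause {n : ℕ} (e : Lit n × Lit n) : Sym2 (Lit n) := s(lneg e.1, e.2)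

@[simp] lemma lneg_lneg {n : ℕ} (l : Lit n) : lneg (lneg l) = l := by
  simp [lneg]

lemma lneg_eq_iff {n : ℕ} {a b : Lit n} : lneg a = b ↔ a = lneg b := by
  constructor <;> rintro rfl <;> simp

@[simp] lemma ecomp_ecomp {n : ℕ} (e : Lit n × Lit n) : ecomp (ecomp e) = e := by
  simp [ecomp]

lemma toClause_ecomp {n : ℕ} (e : Lit n × Lit n) : toClause (ecomp e) = toClause e := by
  simp only [toClause, ecomp, lneg_lneg]
  exact Sym2.eq_swap

lemma mem_clauseEdges {n : ℕ} {c : Sym2 (Lit n)} {e : Lit n × Lit n} :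
    e ∈ clauseEdges c ↔ toClause e = c := by
  induction c using Sym2.inductionOn with
  | hf x y =>
    obtain ⟨⟨i, s⟩, ⟨j, t⟩⟩ := e
    obtain ⟨k, u⟩ := x
    obtain ⟨l, v⟩ := y
    simp only [clauseEdges, Sym2.lift_mk, Finset.mem_insert, Finset.mem_singleton,
      toClause, lneg, Sym2.eq_iff, Prod.ext_iff]
    aesop

lemma clauseEdges_toClause {n : ℕ} (f : Lit n × Lit n) :
    clauseEdges (toClause f) = {f, ecomp f} := by
  obtain ⟨a, b⟩ := f
  simp [toClause, clauseEdges, ecomp]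

lemma toClause_eq_iff {n : ℕ} {e f : Lit n × Lit n} :
    toClause e = toClause f ↔ e = f ∨ e = ecomp f := by
  rw [← mem_clauseEdges, clauseEdges_toClause]
  simp

lemma mem_formulaDigraph {n : ℕ} {F : Finset (Sym2 (Lit n))} {e : Lit n × Lit n} :
    e ∈ formulaDigraph F ↔ toClause e ∈ F := by
  simp [formulaDigraph, mem_clauseEdges]

lemma implDigraph_eq {n : ℕ} (E : Finset (Lit n × Lit n)) :
    implDigraph E = formulaDigraph (E.image toClause) := by
  ext e
  rw [mem_formulaDigraph]
  simp only [implDigraph, Finset.mem_union, Finset.mem_image]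
  constructor
  · rintro (he | ⟨f, hf, rfl⟩)
    · exact ⟨e, he, rfl⟩
    · exact ⟨f, hf, (toClause_ecomp f).symm⟩
  · rintro ⟨f, hf, hfe⟩
    rcases toClause_eq_iff.mp hfe with rfl | rfl
    · exact Or.inl hf
    · exact Or.inr ⟨ecomp e, hf, by simp⟩


lemma toClause_pair {n : ℕ} (x y : Lit n) : toClause (lneg x, y) = s(x, y) := by
  simp [toClause]

lemma image_formulaDigraph {n : ℕ} (F : Finset (Sym2 (Lit n))) :
    (formulaDigraph F).image toClause = F := by
  ext c
  simp only [Finset.mem_image, mem_formulaDigraph]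
  constructor
  · rintro ⟨e, he, rfl⟩; exact he
  · intro hc
    induction c using Sym2.inductionOn with
    | hf x y =>
      exact ⟨(lneg x, y), by rw [toClause_pair]; exact hc, toClause_pair x y⟩

lemma impl_eq_formula_iff {n : ℕ} (E : Finset (Lit n × Lit n)) (F : Finset (Sym2 (Lit n))) :
    implDigraph E = formulaDigraph F ↔ E.image toClause = F := by
  constructor
  · intro h
    have h2 : (implDigraph E).image toClause = E.image toClause := by
      rw [implDigraph_eq, image_formulaDigraph]
    rw [← h2, h, image_formulaDigraph]
  · rintro rfl; exact implDigraph_eq E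

lemma diag_iff {n : ℕ} (e : Lit n × Lit n) :
    ((toClause e).map Prod.fst).IsDiag ↔ e.1.1 = e.2.1 := by
  simp [toClause, lneg]

lemma good_of_notDiag {n : ℕ} {e : Lit n × Lit n}
    (h : ¬((toClause e).map Prod.fst).IsDiag) :
    e.1 ≠ e.2 ∧ e.2 ≠ lneg e.1 := by
  rw [diag_iff] at h
  exact ⟨fun he => h (by rw [he]), fun he => h (by rw [he]; rfl)⟩

lemma notDiag_of_good {n : ℕ} {e : Lit n × Lit n} (h1 : e.1 ≠ e.2) (h2 : e.2 ≠ lneg e.1) :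
    ¬((toClause e).map Prod.fst).IsDiag := by
  rw [diag_iff]
  obtain ⟨⟨i, a⟩, ⟨j, b⟩⟩ := e
  rintro (rfl : i = j)
  simp only [ne_eq, Prod.mk.injEq, lneg] at h1 h2
  cases a <;> cases b <;> simp_all

lemma isSumRep_subset {n : ℕ} {E E' : Finset (Lit n × Lit n)} (h : IsSumRep E)
    (hs : E' ⊆ E) : IsSumRep E' :=
  ⟨fun e he => h.1 e (hs he), fun e he => h.2.1 e (hs he),
   fun e he hc => h.2.2 e (hs he) (hs hc)⟩

lemma toClause_injOn {n : ℕ} {E : Finset (Lit n × Lit n)} (h : IsSumRep E) :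
    Set.InjOn toClause (E : Set (Lit n × Lit n)) := by
  intro a ha b hb hab
  rcases toClause_eq_iff.mp hab with rfl | rfl
  · rfl
  · exact absurd ha (h.2.2 b hb)

lemma insert_rep {n : ℕ} {E' : Finset (Lit n × Lit n)} {F : Finset (Sym2 (Lit n))}
    {e : Lit n × Lit n} {c : Sym2 (Lit n)}
    (hE : IsSumRep E') (hIm : E'.image toClause = F) (hec : toClause e = c)
    (hcF : c ∉ F) (hg1 : e.1 ≠ e.2) (hg2 : e.2 ≠ lneg e.1) :
    IsSumRep (insert e E') ∧ (insert e E').image toClause = insert c F := by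
  have hx : ∀ x ∈ E', toClause x ≠ c := by
    intro x hxE hxc
    exact hcF (by rw [← hIm, ← hxc]; exact Finset.mem_image_of_mem _ hxE)
  refine ⟨⟨?_, ?_, ?_⟩, by rw [Finset.image_insert, hec, hIm]⟩
  · intro x hxm
    rcases Finset.mem_insert.mp hxm with rfl | hx'
    · exact hg1
    · exact hE.1 x hx'
  · intro x hxm
    rcases Finset.mem_insert.mp hxm with rfl | hx'
    · exact hg2
    · exact hE.2.1 x hx'
  · intro x hxm hcm
    rcases Finset.mem_insert.mp hxm with rfl | hx' <;>
      rcases Finset.mem_insert.mp hcm with h | h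
    · exact hg2 ((Prod.ext_iff.mp h).2).symm
    · exact hx (ecomp x) h (by rw [toClause_ecomp, hec])
    · exact hx x hx' (by rw [← toClause_ecomp, h, hec])
    · exact hE.2.2 x hx' h

lemma erase_rep {n : ℕ} {E : Finset (Lit n × Lit n)} {F : Finset (Sym2 (Lit n))}
    {e : Lit n × Lit n} {c : Sym2 (Lit n)}
    (hE : IsSumRep E) (hIm : E.image toClause = insert c F) (hcF : c ∉ F)
    (heE : e ∈ E) (hec : toClause e = c) :
    IsSumRep (E.erase e) ∧ (E.erase e).image toClause = F := by
  refine ⟨isSumRep_subset hE (Finset.erase_subset _ _), ?_⟩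
  ext d
  simp only [Finset.mem_image, Finset.mem_erase]
  constructor
  · rintro ⟨x, ⟨hxe, hxE⟩, rfl⟩
    have hmem : toClause x ∈ insert c F := by
      rw [← hIm]; exact Finset.mem_image_of_mem _ hxE
    rcases Finset.mem_insert.mp hmem with h | h
    · exfalso
      rcases toClause_eq_iff.mp (h.trans hec.symm) with rfl | rfl
      · exact hxe rfl
      · exact hE.2.2 e heE hxE
    · exact h
  · intro hd
    have hmem : d ∈ E.image toClause := by
      rw [hIm]; exact Finset.mem_insert_of_mem hd
    obtain ⟨x, hxE, rfl⟩ := Finset.mem_image.mp hmem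
    refine ⟨x, ⟨?_, hxE⟩, rfl⟩
    rintro rfl
    exact hcF (hec ▸ hd)

lemma count_reps {n : ℕ} :
    ∀ F : Finset (Sym2 (Lit n)), (∀ c ∈ F, ¬(c.map Prod.fst).IsDiag) →
      ({E : Finset (Lit n × Lit n) | IsSumRep E ∧ E.image toClause = F}).ncard
        = 2 ^ F.card := by
  intro F
  induction F using Finset.induction_on with
  | empty =>
    intro _
    have hs : {E : Finset (Lit n × Lit n) | IsSumRep E ∧ E.image toClause = ∅}
        = {(∅ : Finset (Lit n × Lit n))} := by
      ext E
      simp only [Set.mem_setOf_eq, Set.mem_singleton_iff, Finset.image_eq_empty]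
      constructor
      · exact fun h => h.2
      · rintro rfl
        exact ⟨⟨by simp, by simp, by simp⟩, rfl⟩
    rw [hs]
    simp
  | @insert c F hcF ih =>
    intro hgood
    have hc : ¬(c.map Prod.fst).IsDiag := hgood c (Finset.mem_insert_self c F)
    have hF : ∀ d ∈ F, ¬(d.map Prod.fst).IsDiag :=
      fun d hd => hgood d (Finset.mem_insert_of_mem hd)
    clear hgood
    revert hcF hc
    induction c using Sym2.inductionOn with
    | hf x y =>
      intro hcF hc
      have hxy : x.1 ≠ y.1 := by
        simpa using hc
      set S : Set (Finset (Lit n × Lit n)) :=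
        {E | IsSumRep E ∧ E.image toClause = F} with hS
      set e₁ : Lit n × Lit n := (lneg x, y) with he₁
      set e₂ : Lit n × Lit n := (lneg y, x) with he₂
      have ht1 : toClause e₁ = s(x, y) := toClause_pair x y
      have ht2 : toClause e₂ = s(x, y) := by
        rw [he₂, toClause_pair]; exact Sym2.eq_swap
      have hecomp : ecomp e₁ = e₂ := by simp [ecomp, he₁, he₂]
      have he12 : e₁ ≠ e₂ := by
        intro h
        exact hxy (by simpa [he₁, he₂, lneg] using congrArg (fun p => p.1.1) h)
      have hg1 := good_of_notDiag (e := e₁) (by rw [ht1]; exact hc)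
      have hg2 := good_of_notDiag (e := e₂) (by rw [ht2]; exact hc)
      have hnm : ∀ e : Lit n × Lit n, toClause e = s(x, y) →
          ∀ E' ∈ S, e ∉ E' := by
        rintro e he E' ⟨hE', hIm'⟩ hmem
        exact hcF (by rw [← hIm', ← he]; exact Finset.mem_image_of_mem _ hmem)
      have hsplit : {E : Finset (Lit n × Lit n) |
            IsSumRep E ∧ E.image toClause = insert s(x, y) F}
          = (insert e₁ '' S) ∪ (insert e₂ '' S) := by
        ext E
        constructor
        · rintro ⟨hE, hIm⟩
          have hcmem : s(x, y) ∈ E.image toClause := by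
            rw [hIm]; exact Finset.mem_insert_self _ _
          obtain ⟨e, heE, hec⟩ := Finset.mem_image.mp hcmem
          have herase := erase_rep hE hIm hcF heE hec
          have hEeq : insert e (E.erase e) = E := Finset.insert_erase heE
          rcases toClause_eq_iff.mp (hec.trans ht1.symm) with rfl | rfl
          · exact Or.inl ⟨E.erase e₁, herase, hEeq⟩
          · rw [hecomp] at herase hEeq
            exact Or.inr ⟨E.erase e₂, herase, hEeq⟩
        · rintro (⟨E', ⟨hE', hIm'⟩, rfl⟩ | ⟨E', ⟨hE', hIm'⟩, rfl⟩)
          · exact insert_rep hE' hIm' ht1 hcF hg1.1 hg1.2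
          · exact insert_rep hE' hIm' ht2 hcF hg2.1 hg2.2
      have hinj : ∀ e : Lit n × Lit n, toClause e = s(x, y) →
          Set.InjOn (insert e) S := by
        intro e he a ha b hb h
        have := congrArg (fun s => Finset.erase s e) h
        simpa [Finset.erase_insert (hnm e he a ha),
          Finset.erase_insert (hnm e he b hb)] using this
      have hdisj : Disjoint (insert e₁ '' S) (insert e₂ '' S) := by
        rw [Set.disjoint_left]
        rintro E ⟨a, ha, rfl⟩ ⟨b, hb, hEb⟩
        have hm : e₂ ∈ insert e₁ a := by
          rw [← hEb]; exact Finset.mem_insert_self _ _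
        rcases Finset.mem_insert.mp hm with h | h
        · exact he12 h.symm
        · exact hnm e₂ ht2 a ha h
      rw [hsplit, Set.ncard_union_eq hdisj ((Set.toFinite S).image _)
          ((Set.toFinite S).image _),
        Set.ncard_image_of_injOn (hinj e₁ ht1), Set.ncard_image_of_injOn (hinj e₂ ht2),
        ih hF, Finset.card_insert_of_notMem hcF, pow_succ]
      omega

/-- Every implication digraph obtained from a 2-CNF formula with `m` clauses has
exactly `2^m` sum-representations; consequently
`|F(n,m)| · 2^m = |D°(2n,m)|`. -/
theorem sum_representation_count (n m : ℕ) :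
    (∀ F : Finset (Sym2 (Lit n)), F.card = m →
        (∀ c ∈ F, ¬ (c.map Prod.fst).IsDiag) →
        ({E : Finset (Lit n × Lit n) |
            IsSumRep E ∧ implDigraph E = formulaDigraph F}).ncard = 2 ^ m)
    ∧ ({F : Finset (Sym2 (Lit n)) |
          F.card = m ∧ ∀ c ∈ F, ¬ (c.map Prod.fst).IsDiag}).ncard * 2 ^ m
        = ({E : Finset (Lit n × Lit n) | IsSumRep E ∧ E.card = m}).ncard := by
  classical
  constructor
  · intro F hFm hFgood
    have hset : {E : Finset (Lit n × Lit n) |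
          IsSumRep E ∧ implDigraph E = formulaDigraph F}
        = {E : Finset (Lit n × Lit n) | IsSumRep E ∧ E.image toClause = F} := by
      ext E
      exact and_congr_right fun _ => impl_eq_formula_iff E F
    rw [hset, count_reps F hFgood, hFm]
  · set A : Finset (Finset (Lit n × Lit n)) :=
      Finset.univ.filter (fun E => IsSumRep E ∧ E.card = m) with hA
    set B : Finset (Finset (Sym2 (Lit n))) :=
      Finset.univ.filter
        (fun F => F.card = m ∧ ∀ c ∈ F, ¬ (c.map Prod.fst).IsDiag) with hB
    have hAs : {E : Finset (Lit n × Lit n) | IsSumRep E ∧ E.card = m} = ↑A := by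
      ext E; simp [hA]
    have hBs : {F : Finset (Sym2 (Lit n)) |
        F.card = m ∧ ∀ c ∈ F, ¬ (c.map Prod.fst).IsDiag} = ↑B := by
      ext F; simp [hB]
    rw [hAs, hBs, Set.ncard_coe_finset, Set.ncard_coe_finset]
    have hmap : ∀ E ∈ A, E.image toClause ∈ B := by
      intro E hE
      rw [hA, Finset.mem_filter] at hE
      obtain ⟨_, hrep, hcard⟩ := hE
      rw [hB, Finset.mem_filter]
      refine ⟨Finset.mem_univ _, ?_, ?_⟩
      · rw [Finset.card_image_of_injOn (toClause_injOn hrep), hcard]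
      · intro c hc
        obtain ⟨e, heE, rfl⟩ := Finset.mem_image.mp hc
        exact notDiag_of_good (hrep.1 e heE) (hrep.2.1 e heE)
    have hsum := Finset.card_eq_sum_card_fiberwise hmap
    have hfib : ∀ F ∈ B, (A.filter fun E => E.image toClause = F).card = 2 ^ m := by
      intro F hFB
      rw [hB, Finset.mem_filter] at hFB
      obtain ⟨_, hFm, hFg⟩ := hFB
      have hcoe : ↑(A.filter fun E => E.image toClause = F)
          = {E : Finset (Lit n × Lit n) | IsSumRep E ∧ E.image toClause = F} := by
        ext E
        simp only [hA, Finset.coe_filter, Finset.mem_filter, Finset.mem_univ, true_and,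
          Set.mem_setOf_eq]
        constructor
        · rintro ⟨⟨h1, _⟩, h3⟩; exact ⟨h1, h3⟩
        · rintro ⟨h1, h3⟩
          refine ⟨⟨h1, ?_⟩, h3⟩
          rw [← hFm, ← h3]
          exact (Finset.card_image_of_injOn (toClause_injOn h1)).symm
      rw [← Set.ncard_coe_finset, hcoe, count_reps F hFg, hFm]
    rw [hsum, Finset.sum_congr rfl hfib, Finset.sum_const, smul_eq_mul]
end

section
/- If a directed graph D on vertex set {x_1,…,x_n,x̄_1,…,x̄_n} is closed under edge complementation (i.e., for every edge x → y the edge ȳ → x̄ is also in D), and every vertex x of D has a directed path to its complement x̄, then the following holds: if C₁ and C₂ are strongly connected components of D and there is a directed path from some vertex of C₁ to some vertex of C₂, then there is also a directed path from C₂ back to C₁; hence C₁ and C₂ lie in a common strongly connected component. In particular, the contradictory component of an implication digraph is a disjoint union of strongly connected components with no directed paths between distinct ones. -/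
/-- In a digraph on literals that is closed under edge complementation and in which
every vertex has a directed path to its complement, reachability is symmetric: if some
vertex of a strongly connected component `C₁` reaches a vertex of `C₂`, then `C₂`
reaches back to `C₁`; hence the two lie in a common strongly connected component.
In particular the contradictory component of an implication digraph is a disjoint
union of strongly connected components with no directed paths between distinct ones. -/
theorem contradictory_component_sccs {V : Type*} (neg : V → V)
    (hinv : Function.Involutive neg) (Adj : V → V → Prop)
    (hcomp : ∀ u v, Adj u v → Adj (neg v) (neg u))
    (hcontra : ∀ x, Relation.ReflTransGen Adj x (neg x)) :
    ∀ a b, Relation.ReflTransGen Adj a b →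
      Relation.ReflTransGen Adj b a ∧
      (Relation.ReflTransGen Adj a b ∧ Relation.ReflTransGen Adj b a) := by
  have key : ∀ a b, Relation.ReflTransGen Adj a b →
      Relation.ReflTransGen Adj (neg b) (neg a) := by
    intro a b h
    induction h with
    | refl => exact .refl
    | tail _ hbc ih => exact .trans (.single (hcomp _ _ hbc)) ih
  intro a b hab
  have hba : Relation.ReflTransGen Adj b a :=
    ((hcontra b).trans (key a b hab)).trans (by simpa [hinv a] using hcontra (neg a))
  exact ⟨hba, hab, hba⟩
end

section
/- A 2-CNF formula F is satisfiable if and only if its implication digraph contains no contradictory circuit, i.e., there is no literal x with both x ⇝ x̄ and x̄ ⇝ x. Equivalently, F is satisfiable iff no variable lies in the same strongly connected component of the implication digraph as its negation. -/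
/-- The edge relation of the implication digraph of a 2-CNF formula `F`: there is an
edge `u → v` iff some clause of `F` equals `(ū ∨ v)` (each clause `(ξ ∨ η)` contributes
`ξ̄ → η` and `η̄ → ξ`). -/
def implAdj {n : ℕ} (F : Finset (Sym2 (Lit n))) (u v : Lit n) : Prop :=
  s(lneg u, v) ∈ F

/-- type synonym carrying the reachability preorder -/
def LitO {n : ℕ} (_F : Finset (Sym2 (Lit n))) : Type := Lit n

instance {n : ℕ} (F : Finset (Sym2 (Lit n))) : Preorder (LitO F) where
  le u v := Relation.ReflTransGen (implAdj F) u v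
  le_refl _ := Relation.ReflTransGen.refl
  le_trans _ _ _ := Relation.ReflTransGen.trans

/-- map into a linear order respecting reachability -/
noncomputable def toL {n : ℕ} (F : Finset (Sym2 (Lit n))) (l : Lit n) :
    LinearExtension (Antisymmetrization (LitO F) (· ≤ ·)) :=
  toLinearExtension (toAntisymmetrization (· ≤ ·) (l : LitO F))

lemma toL_mono {n : ℕ} (F : Finset (Sym2 (Lit n))) {u v : Lit n}
    (h : Relation.ReflTransGen (implAdj F) u v) : toL F u ≤ toL F v :=
  toLinearExtension.monotone (toAntisymmetrization_mono (α := LitO F) h)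

lemma toL_eq {n : ℕ} (F : Finset (Sym2 (Lit n))) {u v : Lit n}
    (h : toL F u = toL F v) :
    Relation.ReflTransGen (implAdj F) u v ∧ Relation.ReflTransGen (implAdj F) v u := by
  have h' : toAntisymmetrization (α := LitO F) (· ≤ ·) (u : LitO F)
      = toAntisymmetrization (α := LitO F) (· ≤ ·) (v : LitO F) := h
  exact Quotient.exact h'

/-- Aspvall–Plass–Tarjan: a 2-CNF formula `F` (clauses are unordered pairs of literals
with distinct underlying variables) is satisfiable iff its implication digraph contains
no contradictory circuit, i.e. there is no literal `x` with both `x ⇝ x̄` and `x̄ ⇝ x`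
(no variable lies in the same strongly connected component as its negation). -/
theorem aspvall_plass_tarjan (n : ℕ) (F : Finset (Sym2 (Lit n)))
    (hF : ∀ c ∈ F, ¬ (c.map Prod.fst).IsDiag) :
    (∃ a : Fin n → Bool, ∀ c ∈ F, ∃ l ∈ c, a l.1 = l.2)
      ↔ ∀ x : Lit n,
          ¬ (Relation.ReflTransGen (implAdj F) x (lneg x)
            ∧ Relation.ReflTransGen (implAdj F) (lneg x) x) := by
  constructor
  · rintro ⟨a, ha⟩ x ⟨h1, h2⟩
    -- truth is preserved along reachability
    have key : ∀ u v : Lit n, Relation.ReflTransGen (implAdj F) u v →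
        a u.1 = u.2 → a v.1 = v.2 := by
      intro u v h
      induction h with
      | refl => exact fun h => h
      | tail _ hstep ih =>
        intro hu
        rename_i b c _
        obtain ⟨l, hl, hal⟩ := ha _ hstep
        rcases Sym2.mem_iff.mp hl with rfl | rfl
        · exfalso
          have hb := ih hu
          simp only [lneg] at hal
          rw [hb] at hal
          simp at hal
        · exact hal
    rcases Bool.eq_or_eq_not (a x.1) x.2 with hx | hx
    · have h2' := key _ _ h1 hx
      simp only [lneg] at h2'
      rw [hx] at h2'
      simp at h2'
    · have hx' : a (lneg x).1 = (lneg x).2 := by simpa [lneg] using hx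
      have h2' := key _ _ h2 hx'
      rw [hx] at h2'
      simp at h2'
  · intro hno
    have hne : ∀ l : Lit n, toL F l ≠ toL F (lneg l) := by
      intro l h
      exact hno l ⟨(toL_eq F h).1, (toL_eq F h).2⟩
    refine ⟨fun i => decide (toL F (i, false) < toL F (i, true)), ?_⟩
    intro c hc
    -- characterize truth: literal `l` is assigned true iff `[lneg l] < [l]`
    have hT : ∀ l : Lit n,
        (fun i => decide (toL F (i, false) < toL F (i, true))) l.1 = l.2
          ↔ toL F (lneg l) < toL F l := by
      rintro ⟨i, b⟩
      cases b
      · simp only [lneg, Bool.not_false, decide_eq_false_iff_not, not_lt]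
        constructor
        · intro h
          exact lt_of_le_of_ne h (hne (i, false)).symm
        · exact le_of_lt
      · simp [lneg]
    induction c using Sym2.ind with
    | _ ξ η =>
      by_contra hcon
      push_neg at hcon
      have hξ : ¬ toL F (lneg ξ) < toL F ξ := fun h =>
        hcon ξ (Sym2.mem_mk_left ξ η) ((hT ξ).mpr h)
      have hη : ¬ toL F (lneg η) < toL F η := fun h =>
        hcon η (Sym2.mem_mk_right ξ η) ((hT η).mpr h)
      have e1 : implAdj F (lneg ξ) η := by
        simpa [implAdj, lneg_lneg] using hc
      have e2 : implAdj F (lneg η) ξ := by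
        simp only [implAdj, lneg_lneg]
        rwa [Sym2.eq_swap]
      have m1 : toL F (lneg ξ) ≤ toL F η := toL_mono F (Relation.ReflTransGen.single e1)
      have m2 : toL F (lneg η) ≤ toL F ξ := toL_mono F (Relation.ReflTransGen.single e2)
      exact hne η (le_antisymm (le_of_not_gt hη)
        (m2.trans ((le_of_not_gt hξ).trans m1)))
end
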